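/- arXiv:1208.0641 — 4 statements merged into one kernel-verified Lean document; each statement's English description precedes it below -/
import Mathlib

section
/- Let ω > 0 be a real number and v ∈ ℝ². For each positive integer N let d_p = (cos(2πp/N), sin(2πp/N)) for p = 1, …, N. Then the uniform Riemann sums (1/N) Σ_{p=1}^{N} exp(i ω d_p · v) converge, as N → ∞, to J₀(ω‖v‖), where d_p · v denotes the Euclidean inner product and ‖v‖ the Euclidean norm. -/
/-- The Bessel function of the first kind of integer order `n`, defined via
the integral representation `J_n(x) = (1/π) ∫_0^π cos(n θ - x sin θ) dθ`. -/
noncomputable def besselJ (n : ℕ) (x : ℝ) : ℝ :=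
  (1 / Real.pi) * ∫ θ in (0:ℝ)..Real.pi, Real.cos (n * θ - x * Real.sin θ)

open Complex Real Filter intervalIntegral Topology
lemma besselJ0_eq (a : ℝ) : besselJ 0 a = (1/π) * ∫ θ in (0:ℝ)..π, Real.cos (a * Real.sin θ) := by
  unfold besselJ
  norm_num [Real.cos_neg]

lemma sin_int (a : ℝ) : (∫ θ in (0:ℝ)..2*π, Real.sin (a * Real.sin θ)) = 0 := by
  have h1 : (∫ θ in (0:ℝ)..2*π, Real.sin (a * Real.sin θ))
      = (∫ θ in (0:ℝ)..π, Real.sin (a * Real.sin θ))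
        + ∫ θ in π..2*π, Real.sin (a * Real.sin θ) :=
    (integral_add_adjacent_intervals
      (Continuous.intervalIntegrable (by fun_prop) _ _)
      (Continuous.intervalIntegrable (by fun_prop) _ _)).symm
  have h2 : (∫ θ in π..2*π, Real.sin (a * Real.sin θ))
      = ∫ θ in (0:ℝ)..π, Real.sin (a * Real.sin (θ + π)) := by
    rw [integral_comp_add_right (fun θ => Real.sin (a * Real.sin θ)) π]
    norm_num [two_mul]
  have h3 : (∫ θ in (0:ℝ)..π, Real.sin (a * Real.sin (θ + π)))
      = - ∫ θ in (0:ℝ)..π, Real.sin (a * Real.sin θ) := by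
    rw [← integral_neg]
    simp [Real.sin_add_pi, mul_neg]
  rw [h1, h2, h3]; ring

lemma cos_int (a : ℝ) : (∫ θ in (0:ℝ)..2*π, Real.cos (a * Real.sin θ))
    = 2 * ∫ θ in (0:ℝ)..π, Real.cos (a * Real.sin θ) := by
  have h1 : (∫ θ in (0:ℝ)..2*π, Real.cos (a * Real.sin θ))
      = (∫ θ in (0:ℝ)..π, Real.cos (a * Real.sin θ))
        + ∫ θ in π..2*π, Real.cos (a * Real.sin θ) :=
    (integral_add_adjacent_intervals
      (Continuous.intervalIntegrable (by fun_prop) _ _)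
      (Continuous.intervalIntegrable (by fun_prop) _ _)).symm
  have h2 : (∫ θ in π..2*π, Real.cos (a * Real.sin θ))
      = ∫ θ in (0:ℝ)..π, Real.cos (a * Real.sin (θ + π)) := by
    rw [integral_comp_add_right (fun θ => Real.cos (a * Real.sin θ)) π]
    norm_num [two_mul]
  have h3 : (∫ θ in (0:ℝ)..π, Real.cos (a * Real.sin (θ + π)))
      = ∫ θ in (0:ℝ)..π, Real.cos (a * Real.sin θ) := by
    simp [Real.sin_add_pi, mul_neg]
  rw [h1, h2, h3]; ring

lemma exp_int (a : ℝ) :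
    (∫ θ in (0:ℝ)..2*π, Complex.exp (Complex.I * ((a * Real.sin θ : ℝ) : ℂ)))
      = ((2 * π * besselJ 0 a : ℝ) : ℂ) := by
  have hpt : ∀ θ : ℝ, Complex.exp (Complex.I * ((a * Real.sin θ : ℝ) : ℂ))
      = ((Real.cos (a * Real.sin θ) : ℝ) : ℂ) + ((Real.sin (a * Real.sin θ) : ℝ) : ℂ) * Complex.I := by
    intro θ
    rw [mul_comm, Complex.exp_mul_I]
    push_cast
    ring
  have h1 : (∫ θ in (0:ℝ)..2*π, Complex.exp (Complex.I * ((a * Real.sin θ : ℝ) : ℂ)))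
      = (∫ θ in (0:ℝ)..2*π, ((Real.cos (a * Real.sin θ) : ℝ) : ℂ))
        + ∫ θ in (0:ℝ)..2*π, ((Real.sin (a * Real.sin θ) : ℝ) : ℂ) * Complex.I := by
    simp only [hpt]
    exact integral_add
      (Continuous.intervalIntegrable (by fun_prop) _ _)
      (Continuous.intervalIntegrable (by fun_prop) _ _)
  rw [h1, integral_mul_const, integral_ofReal, integral_ofReal, sin_int, cos_int, besselJ0_eq]
  have hpi : ((π : ℝ) : ℂ) ≠ 0 := Complex.ofReal_ne_zero.mpr Real.pi_ne_zero
  push_cast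
  field_simp
  ring

lemma shift_int (a ψ : ℝ) :
    (∫ θ in (0:ℝ)..2*π, Complex.exp (Complex.I * ((a * Real.sin (θ + ψ) : ℝ) : ℂ)))
      = ∫ θ in (0:ℝ)..2*π, Complex.exp (Complex.I * ((a * Real.sin θ : ℝ) : ℂ)) := by
  have hper : Function.Periodic
      (fun θ : ℝ => Complex.exp (Complex.I * ((a * Real.sin θ : ℝ) : ℂ))) (2*π) := by
    intro θ; simp [Real.sin_add_two_pi]
  have h1 := integral_comp_add_right
    (fun θ : ℝ => Complex.exp (Complex.I * ((a * Real.sin θ : ℝ) : ℂ))) ψ (a := 0) (b := 2*π)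
  rw [h1, zero_add]
  have h2 := hper.intervalIntegral_add_eq ψ 0
  rw [zero_add] at h2
  rw [show 2*π + ψ = ψ + 2*π by ring, h2]

lemma plane_int (x y : ℝ) :
    (∫ θ in (0:ℝ)..2*π, Complex.exp (Complex.I * ((x * Real.cos θ + y * Real.sin θ : ℝ) : ℂ)))
      = ((2 * π * besselJ 0 (Real.sqrt (x^2 + y^2)) : ℝ) : ℂ) := by
  set a := Real.sqrt (x^2 + y^2) with ha
  set c : ℂ := (y : ℂ) + (x : ℂ) * Complex.I with hc
  have habs : ‖c‖ = a := by
    rw [hc, Complex.norm_add_mul_I, ha]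
    ring_nf
  set ψ := Complex.arg c with hψ
  have hcos : a * Real.cos ψ = y := by
    have h := Complex.norm_mul_cos_arg c
    rw [habs] at h
    simpa [hc] using h
  have hsin : a * Real.sin ψ = x := by
    have h := Complex.norm_mul_sin_arg c
    rw [habs] at h
    simpa [hc] using h
  have hpt : ∀ θ : ℝ, x * Real.cos θ + y * Real.sin θ = a * Real.sin (θ + ψ) := by
    intro θ
    rw [Real.sin_add]
    linear_combination (-Real.cos θ) * hsin + (-Real.sin θ) * hcos
  simp only [hpt]
  rw [shift_int, exp_int]
lemma riemann_tendsto (g : ℝ → ℂ) (K : NNReal) (hg : LipschitzWith K g) :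
    Tendsto (fun N : ℕ => (1/N : ℂ) * ∑ i ∈ Finset.range N, g (2*π*(i+1)/N)) atTop
      (𝓝 ((1/(2*π) : ℂ) * ∫ θ in (0:ℝ)..2*π, g θ)) := by
  rw [← tendsto_sub_nhds_zero_iff]
  have hπ : (π:ℝ) ≠ 0 := Real.pi_ne_zero
  apply squeeze_zero_norm' (a := fun N : ℕ => (2*π*K : ℝ)/N)
  · filter_upwards [eventually_ge_atTop 1] with N hN
    have hN0 : (N:ℝ) ≠ 0 := by positivity
    have hNpos : (0:ℝ) < N := by positivity
    set t : ℕ → ℝ := fun i => 2*π*i/N with ht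
    have hlen : ∀ i : ℕ, t (i+1) - t i = 2*π/N := by
      intro i; simp only [ht]; push_cast; field_simp; ring
    have hmono : ∀ i : ℕ, t i ≤ t (i+1) := by
      intro i
      have h := hlen i
      have hpos : (0:ℝ) ≤ 2*π/N := by positivity
      linarith
    have hsplit : (∫ θ in (0:ℝ)..2*π, g θ) = ∑ i ∈ Finset.range N, ∫ θ in t i..t (i+1), g θ := by
      rw [intervalIntegral.sum_integral_adjacent_intervals
        (fun k _ => (hg.continuous.intervalIntegrable _ _))]
      have h0 : t 0 = 0 := by simp [ht]
      have hNt : t N = 2*π := by simp only [ht]; field_simp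
      rw [h0, hNt]
    have key : (1/N : ℂ) * ∑ i ∈ Finset.range N, g (2*π*(i+1)/N)
          - (1/(2*π) : ℂ) * ∫ θ in (0:ℝ)..2*π, g θ
        = (1/(2*π) : ℂ) * ∑ i ∈ Finset.range N,
            (((2*π/N : ℝ) : ℂ) * g (t (i+1)) - ∫ θ in t i..t (i+1), g θ) := by
      rw [hsplit, Finset.sum_sub_distrib, mul_sub, ← Finset.mul_sum, ← mul_assoc]
      congr 1
      have harg : ∀ i ∈ Finset.range N, g (2*π*(i+1)/N) = g (t (i+1)) := by
        intro i _
        have he : (2*π*(i+1)/N : ℝ) = t (i+1) := by simp only [ht]; push_cast; ring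
        rw [he]
      rw [Finset.sum_congr rfl harg]
      congr 1
      have hπc : ((π:ℝ):ℂ) ≠ 0 := Complex.ofReal_ne_zero.mpr hπ
      have hNc : ((N:ℝ):ℂ) ≠ 0 := by exact_mod_cast Complex.ofReal_ne_zero.mpr hN0
      push_cast
      field_simp
    rw [key]
    have hterm : ∀ i ∈ Finset.range N,
        ‖((2*π/N : ℝ) : ℂ) * g (t (i+1)) - ∫ θ in t i..t (i+1), g θ‖
          ≤ (K : ℝ) * (2*π/N) * (2*π/N) := by
      intro i _
      have hconst : ((2*π/N : ℝ) : ℂ) * g (t (i+1)) = ∫ _ in t i..t (i+1), g (t (i+1)) := by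
        rw [intervalIntegral.integral_const, hlen i, Complex.real_smul]
      rw [hconst, ← intervalIntegral.integral_sub
        (intervalIntegrable_const) (hg.continuous.intervalIntegrable _ _)]
      have hC : ∀ θ ∈ Set.uIoc (t i) (t (i+1)), ‖g (t (i+1)) - g θ‖ ≤ (K : ℝ) * (2*π/N) := by
        intro θ hθ
        rw [Set.uIoc_of_le (hmono i)] at hθ
        have hd := hg.dist_le_mul (t (i+1)) θ
        rw [dist_eq_norm] at hd
        refine hd.trans ?_
        have hpos : (0:ℝ) ≤ 2*π/N := by positivity
        have h1 : |t (i+1) - θ| ≤ 2*π/N := by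
          rw [abs_le]
          constructor
          · linarith [hθ.2, hlen i]
          · linarith [hθ.1, hlen i]
        rw [Real.dist_eq]
        exact mul_le_mul_of_nonneg_left h1 K.coe_nonneg
      have h2 := intervalIntegral.norm_integral_le_of_norm_le_const hC
      rw [hlen i, _root_.abs_of_nonneg (by positivity : (0:ℝ) ≤ 2*π/N)] at h2
      exact h2
    rw [norm_mul]
    have hnorm1 : ‖(1/(2*π) : ℂ)‖ = 1/(2*π) := by
      rw [show (1/(2*π):ℂ) = ((1/(2*π):ℝ):ℂ) by push_cast; ring, Complex.norm_real,
        Real.norm_eq_abs, _root_.abs_of_nonneg (by positivity)]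
    have hsum : ‖∑ i ∈ Finset.range N,
          (((2*π/N : ℝ) : ℂ) * g (t (i+1)) - ∫ θ in t i..t (i+1), g θ)‖
        ≤ N * ((K:ℝ) * (2*π/N) * (2*π/N)) := by
      refine (norm_sum_le _ _).trans ?_
      refine (Finset.sum_le_sum hterm).trans (le_of_eq ?_)
      rw [Finset.sum_const, Finset.card_range, nsmul_eq_mul]
    rw [hnorm1]
    refine le_trans (mul_le_mul_of_nonneg_left hsum (by positivity)) (le_of_eq ?_)
    field_simp
  · exact tendsto_const_div_atTop_nhds_zero_nat _
lemma lips (x y : ℝ) :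
    LipschitzWith (‖x‖₊ + ‖y‖₊)
      (fun θ : ℝ => Complex.exp (Complex.I * ((x * Real.cos θ + y * Real.sin θ : ℝ) : ℂ))) := by
  have hder : ∀ θ : ℝ, HasDerivAt
      (fun θ : ℝ => Complex.exp (Complex.I * ((x * Real.cos θ + y * Real.sin θ : ℝ) : ℂ)))
      (Complex.exp (Complex.I * ((x * Real.cos θ + y * Real.sin θ : ℝ) : ℂ))
        * (Complex.I * ((x * (-Real.sin θ) + y * Real.cos θ : ℝ) : ℂ))) θ := by
    intro θ
    have h1 : HasDerivAt (fun θ : ℝ => x * Real.cos θ + y * Real.sin θ)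
        (x * (-Real.sin θ) + y * Real.cos θ) θ :=
      ((Real.hasDerivAt_cos θ).const_mul x).add ((Real.hasDerivAt_sin θ).const_mul y)
    exact ((h1.ofReal_comp).const_mul Complex.I).cexp
  apply lipschitzWith_of_nnnorm_deriv_le (fun θ => (hder θ).differentiableAt)
  intro θ
  rw [(hder θ).deriv, ← NNReal.coe_le_coe]
  simp only [NNReal.coe_add, coe_nnnorm, norm_mul, Complex.norm_exp,
    Complex.norm_I, Complex.norm_real]
  have h1 : (Complex.I * ((x * Real.cos θ + y * Real.sin θ : ℝ) : ℂ)).re = 0 := by simp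
  rw [h1]
  simp only [Real.exp_zero, one_mul, Real.norm_eq_abs]
  have := Real.abs_sin_le_one θ
  have := Real.abs_cos_le_one θ
  have h2 : |x * -Real.sin θ + y * Real.cos θ| ≤ |x| * |Real.sin θ| + |y| * |Real.cos θ| := by
    refine (abs_add_le _ _).trans ?_
    rw [abs_mul, abs_mul, abs_neg]
  nlinarith [abs_nonneg x, abs_nonneg y]
/-- Riemann sums of the plane wave over `N` equally spaced directions on the
unit circle converge to `J₀(ω ‖v‖)` as `N → ∞`. -/
theorem riemannSum_planeWave_tendsto_besselJ0
    (ω : ℝ) (hω : 0 < ω) (v : EuclideanSpace ℝ (Fin 2)) :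
    Filter.Tendsto
      (fun N : ℕ =>
        (1 / N : ℂ) * ∑ p ∈ Finset.Icc 1 N,
          Complex.exp (Complex.I * ω *
            (Real.cos (2 * Real.pi * p / N) * v 0 +
              Real.sin (2 * Real.pi * p / N) * v 1)))
      Filter.atTop (nhds ((besselJ 0 (ω * ‖v‖) : ℝ) : ℂ)) := by
  set x : ℝ := ω * v 0 with hx
  set y : ℝ := ω * v 1 with hy
  set g : ℝ → ℂ := fun θ => Complex.exp (Complex.I * ((x * Real.cos θ + y * Real.sin θ : ℝ) : ℂ))
    with hg
  have hnorm : ω * ‖v‖ = Real.sqrt (x^2 + y^2) := by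
    rw [EuclideanSpace.norm_eq]
    rw [show ∑ i, ‖v i‖^2 = ‖v 0‖^2 + ‖v 1‖^2 from by rw [Fin.sum_univ_two]]
    rw [show (x^2 + y^2 : ℝ) = ω^2 * (‖v 0‖^2 + ‖v 1‖^2) from by
      rw [Real.norm_eq_abs, Real.norm_eq_abs, _root_.sq_abs, _root_.sq_abs, hx, hy]; ring]
    rw [Real.sqrt_mul (sq_nonneg ω), Real.sqrt_sq hω.le]
  have hlim := riemann_tendsto g (‖x‖₊ + ‖y‖₊) (lips x y)
  have hfun : (fun N : ℕ =>
        (1 / N : ℂ) * ∑ p ∈ Finset.Icc 1 N,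
          Complex.exp (Complex.I * ω *
            (Real.cos (2 * Real.pi * p / N) * v 0 +
              Real.sin (2 * Real.pi * p / N) * v 1)))
      = fun N : ℕ => (1/N : ℂ) * ∑ i ∈ Finset.range N, g (2*π*(i+1)/N) := by
    funext N
    congr 1
    rw [← Finset.Ico_add_one_right_eq_Icc, ← Finset.sum_Ico_add' (fun p : ℕ =>
      Complex.exp (Complex.I * ω * (Real.cos (2 * Real.pi * p / N) * v 0 +
        Real.sin (2 * Real.pi * p / N) * v 1))) 0 N (c := 1), ← Finset.range_eq_Ico]
    apply Finset.sum_congr rfl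
    intro p _
    simp only [hg, hx, hy]
    congr 1
    push_cast
    ring
  have hval : ((besselJ 0 (ω * ‖v‖) : ℝ) : ℂ) = (1/(2*π) : ℂ) * ∫ θ in (0:ℝ)..2*π, g θ := by
    simp only [hg]
    rw [plane_int, ← hnorm]
    have hπc : ((π:ℝ):ℂ) ≠ 0 := Complex.ofReal_ne_zero.mpr Real.pi_ne_zero
    push_cast
    field_simp
  rw [hfun, hval]
  exact hlim
end

section
/- Let ω > 0, let M be a positive integer, let r₁, …, r_M ∈ ℝ² be points, and let r ∈ ℝ². For each positive integer N set d_p = (cos(2πp/N), sin(2πp/N)) for p = 1, …, N. Then the quantity | Σ_{m=1}^{M} ( (1/N) Σ_{p=1}^{N} exp(i ω d_p · (r_m − r)) )² | (complex modulus) converges, as N → ∞, to Σ_{m=1}^{M} J₀(ω‖r_m − r‖)². (This is the structure identified in Theorem 3.3: for a sufficiently large number N of incident/observation directions, the single-frequency subspace migration imaging function is proportional to Σ_m J₀²(ω|r_m − r|).) -/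
open intervalIntegral Filter Finset Real


lemma riemann_aux (f : ℝ → ℂ) (hf : Continuous f) :
    Tendsto (fun N : ℕ => (1 / N : ℂ) * ∑ p ∈ Finset.Icc 1 N, f (2 * Real.pi * p / N))
      atTop (nhds ((2 * Real.pi)⁻¹ • ∫ x in (0:ℝ)..(2 * Real.pi), f x)) := by
  rw [Metric.tendsto_atTop]
  intro ε hε
  have huc := (isCompact_Icc (a := (0:ℝ)) (b := 2 * Real.pi)).uniformContinuousOn_of_continuous
    hf.continuousOn
  rw [Metric.uniformContinuousOn_iff] at huc
  obtain ⟨δ, hδ, hδ'⟩ := huc (ε / 2) (by positivity)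
  refine ⟨⌈2 * Real.pi / δ⌉₊ + 1, fun N hN => ?_⟩
  have hN1 : 1 ≤ N := le_trans (Nat.le_add_left 1 _) hN
  have hNR : (0:ℝ) < N := by exact_mod_cast hN1
  have hNδ : 2 * Real.pi / N < δ := by
    rw [div_lt_iff₀ hNR]
    have h1 : 2 * Real.pi / δ < N := by
      calc 2 * Real.pi / δ ≤ ⌈2 * Real.pi / δ⌉₊ := Nat.le_ceil _
      _ < N := by exact_mod_cast Nat.lt_of_lt_of_le (Nat.lt_succ_self _) hN
    have h2 := (div_lt_iff₀ hδ).mp h1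
    linarith [mul_comm (N:ℝ) δ]
  set a : ℕ → ℝ := fun i => 2 * Real.pi * i / N with ha
  have hmono : ∀ i j : ℕ, i ≤ j → a i ≤ a j := by
    intro i j hij
    have hij' : (i:ℝ) ≤ j := by exact_mod_cast hij
    simp only [ha]
    gcongr
  have hstep : ∀ i : ℕ, a (i+1) - a i = 2 * Real.pi / N := by
    intro i; simp only [ha]; push_cast; field_simp; ring
  have hsplit : (∫ x in (0:ℝ)..(2 * Real.pi), f x)
      = ∑ i ∈ Finset.range N, ∫ x in a i..a (i+1), f x := by
    have h := intervalIntegral.sum_integral_adjacent_intervals (a := a) (n := N)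
      (μ := MeasureTheory.volume) (fun i _ => hf.intervalIntegrable _ _)
    rw [h]
    have h0 : a 0 = 0 := by simp [ha]
    have hNN : a N = 2 * Real.pi := by simp only [ha]; field_simp
    rw [h0, hNN]
  have key : (1 / N : ℂ) * ∑ p ∈ Finset.Icc 1 N, f (2 * Real.pi * p / N)
      - (2 * Real.pi)⁻¹ • ∫ x in (0:ℝ)..(2 * Real.pi), f x
      = ((2 * Real.pi)⁻¹ : ℝ) • (∑ i ∈ Finset.range N,
          (((2 * Real.pi / N : ℝ)) • f (a (i+1)) - ∫ x in a i..a (i+1), f x)) := by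
    rw [hsplit, ← Finset.Ico_add_one_right_eq_Icc, Finset.sum_Ico_eq_sum_range]
    rw [Finset.sum_sub_distrib, smul_sub]
    congr 1
    rw [Finset.smul_sum, Finset.mul_sum]
    refine Finset.sum_congr rfl fun i _ => ?_
    have harg : 2 * Real.pi * (↑(1 + i) : ℝ) / N = a (i+1) := by
      simp only [ha]; push_cast; ring
    rw [harg, smul_smul, Complex.real_smul]
    congr 1
    push_cast
    have hpi : (Real.pi : ℂ) ≠ 0 := by exact_mod_cast Real.pi_ne_zero
    have hNc : (N:ℂ) ≠ 0 := by exact_mod_cast hNR.ne'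
    field_simp
  rw [dist_eq_norm, key, norm_smul]
  have hterm : ∀ i ∈ Finset.range N,
      ‖((2 * Real.pi / N : ℝ)) • f (a (i+1)) - ∫ x in a i..a (i+1), f x‖
        ≤ (ε/2) * (2 * Real.pi / N) := by
    intro i hi
    have hi' : i + 1 ≤ N := Finset.mem_range.mp hi
    have hab : a i ≤ a (i+1) := hmono _ _ (Nat.le_succ i)
    have hai0 : 0 ≤ a i := by
      simp only [ha]; positivity
    have hub : a (i+1) ≤ 2 * Real.pi := by
      simp only [ha]
      rw [div_le_iff₀ hNR]
      have : ((i:ℝ) + 1) ≤ N := by exact_mod_cast hi'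
      push_cast
      nlinarith [Real.pi_pos]
    have hconst : ((2 * Real.pi / N : ℝ)) • f (a (i+1))
        = ∫ _ in a i..a (i+1), f (a (i+1)) := by
      rw [intervalIntegral.integral_const, hstep]
    rw [hconst, ← intervalIntegral.integral_sub (intervalIntegrable_const)
      (hf.intervalIntegrable _ _)]
    refine (intervalIntegral.norm_integral_le_of_norm_le_const (C := ε/2) ?_).trans ?_
    · intro x hx
      rw [Set.uIoc_of_le hab] at hx
      have hx0 : x ∈ Set.Icc (0:ℝ) (2 * Real.pi) :=
        ⟨hai0.trans hx.1.le, hx.2.trans hub⟩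
      have hb0 : a (i+1) ∈ Set.Icc (0:ℝ) (2 * Real.pi) := ⟨hai0.trans hab, hub⟩
      have hdist : dist (a (i+1)) x < δ := by
        rw [Real.dist_eq, abs_of_nonneg (by linarith [hx.2])]
        have := hstep i
        linarith [hx.1]
      have := hδ' _ hb0 _ hx0 hdist
      rw [dist_eq_norm] at this
      exact this.le
    · rw [show a (i+1) - a i = 2 * Real.pi / N from hstep i,
        abs_of_nonneg (by positivity)]
  have hbound : ‖∑ i ∈ Finset.range N,
      (((2 * Real.pi / N : ℝ)) • f (a (i+1)) - ∫ x in a i..a (i+1), f x)‖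
      ≤ N * ((ε/2) * (2 * Real.pi / N)) := by
    refine (norm_sum_le _ _).trans ?_
    calc ∑ i ∈ Finset.range N, ‖((2 * Real.pi / N : ℝ)) • f (a (i+1)) - ∫ x in a i..a (i+1), f x‖
        ≤ ∑ _i ∈ Finset.range N, (ε/2) * (2 * Real.pi / N) := Finset.sum_le_sum hterm
      _ = N * ((ε/2) * (2 * Real.pi / N)) := by
          rw [Finset.sum_const, Finset.card_range, nsmul_eq_mul]
  calc ‖((2 * Real.pi)⁻¹ : ℝ)‖ * ‖∑ i ∈ Finset.range N,
        (((2 * Real.pi / N : ℝ)) • f (a (i+1)) - ∫ x in a i..a (i+1), f x)‖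
      ≤ (2 * Real.pi)⁻¹ * (N * ((ε/2) * (2 * Real.pi / N))) := by
        rw [Real.norm_eq_abs, abs_of_nonneg (by positivity)]
        exact mul_le_mul_of_nonneg_left hbound (by positivity)
    _ = ε / 2 := by field_simp
    _ < ε := by linarith


lemma half_sin (R : ℝ) : ∫ x in (0:ℝ)..Real.pi, Real.sin (R * Real.cos x) = 0 := by
  have h : ∫ x in (0:ℝ)..Real.pi, Real.sin (R * Real.cos (Real.pi - x))
      = ∫ x in (0:ℝ)..Real.pi, Real.sin (R * Real.cos x) := by
    rw [intervalIntegral.integral_comp_sub_left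
      (fun y => Real.sin (R * Real.cos y)) Real.pi]
    norm_num
  have h2 : ∀ x : ℝ, Real.sin (R * Real.cos (Real.pi - x)) = - Real.sin (R * Real.cos x) := by
    intro x; rw [Real.cos_pi_sub, mul_neg, Real.sin_neg]
  simp_rw [h2, intervalIntegral.integral_neg] at h
  linarith

lemma integral_sin_Rcos (R : ℝ) :
    ∫ x in (0:ℝ)..(2*Real.pi), Real.sin (R * Real.cos x) = 0 := by
  have hsplit := intervalIntegral.integral_add_adjacent_intervals
    (a := (0:ℝ)) (b := Real.pi) (c := 2*Real.pi)
    (f := fun x => Real.sin (R * Real.cos x)) (μ := MeasureTheory.volume)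
    ((Continuous.intervalIntegrable (by continuity) _ _))
    ((Continuous.intervalIntegrable (by continuity) _ _))
  rw [← hsplit, half_sin]
  have h : ∫ x in Real.pi..(2*Real.pi), Real.sin (R * Real.cos x)
      = ∫ x in (0:ℝ)..Real.pi, Real.sin (R * Real.cos (x + Real.pi)) := by
    rw [intervalIntegral.integral_comp_add_right (fun y => Real.sin (R * Real.cos y)) Real.pi]
    norm_num [two_mul]
  rw [h]
  have h2 : ∀ x : ℝ, Real.sin (R * Real.cos (x + Real.pi)) = - Real.sin (R * Real.cos x) := by
    intro x; rw [Real.cos_add_pi]; rw [show R * -Real.cos x = -(R * Real.cos x) by ring,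
      Real.sin_neg]
  simp_rw [h2, intervalIntegral.integral_neg, half_sin]
  norm_num

lemma integral_cos_Rcos (R : ℝ) :
    ∫ x in (0:ℝ)..(2*Real.pi), Real.cos (R * Real.cos x)
      = 2 * ∫ x in (0:ℝ)..Real.pi, Real.cos (R * Real.sin x) := by
  have hsplit := intervalIntegral.integral_add_adjacent_intervals
    (a := (0:ℝ)) (b := Real.pi) (c := 2*Real.pi)
    (f := fun x => Real.cos (R * Real.cos x)) (μ := MeasureTheory.volume)
    ((Continuous.intervalIntegrable (by continuity) _ _))
    ((Continuous.intervalIntegrable (by continuity) _ _))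
  rw [← hsplit]
  have h : ∫ x in Real.pi..(2*Real.pi), Real.cos (R * Real.cos x)
      = ∫ x in (0:ℝ)..Real.pi, Real.cos (R * Real.cos (x + Real.pi)) := by
    rw [intervalIntegral.integral_comp_add_right (fun y => Real.cos (R * Real.cos y)) Real.pi]
    norm_num [two_mul]
  rw [h]
  have h2 : ∀ x : ℝ, Real.cos (R * Real.cos (x + Real.pi)) = Real.cos (R * Real.cos x) := by
    intro x; rw [Real.cos_add_pi, show R * -Real.cos x = -(R * Real.cos x) by ring, Real.cos_neg]
  simp_rw [h2]
  have hcs : ∫ x in (0:ℝ)..Real.pi, Real.cos (R * Real.cos x)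
      = ∫ x in (0:ℝ)..Real.pi, Real.cos (R * Real.sin x) := by
    have hper : Function.Periodic (fun x => Real.cos (R * Real.cos x)) Real.pi := by
      intro x
      simp only [Real.cos_add_pi, show ∀ y:ℝ, R * -y = -(R*y) from fun y => by ring,
        Real.cos_neg]
    have h1 : ∫ x in (-(Real.pi/2))..(-(Real.pi/2) + Real.pi), Real.cos (R * Real.cos x)
        = ∫ x in (0:ℝ)..(0 + Real.pi), Real.cos (R * Real.cos x) :=
      hper.intervalIntegral_add_eq (-(Real.pi/2)) 0
    have h3 : ∫ x in (0:ℝ)..Real.pi, Real.cos (R * Real.cos (x - Real.pi/2))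
        = ∫ x in (-(Real.pi/2))..(-(Real.pi/2) + Real.pi), Real.cos (R * Real.cos x) := by
      rw [intervalIntegral.integral_comp_sub_right (fun y => Real.cos (R * Real.cos y))
        (Real.pi/2)]
      norm_num
      ring_nf
    have h4 : ∀ x : ℝ, Real.cos (R * Real.cos (x - Real.pi/2)) = Real.cos (R * Real.sin x) := by
      intro x
      rw [show x - Real.pi/2 = -(Real.pi/2 - x) by ring, Real.cos_neg, Real.cos_pi_div_two_sub]
    simp_rw [h4] at h3
    rw [h3, h1]
    norm_num
  rw [hcs]
  ring

lemma exp_integral (R : ℝ) :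
    ∫ θ in (0:ℝ)..(2*Real.pi), Complex.exp (Complex.I * (R * Real.cos θ))
      = ((2 * ∫ x in (0:ℝ)..Real.pi, Real.cos (R * Real.sin x) : ℝ) : ℂ) := by
  have h : ∀ θ : ℝ, Complex.exp (Complex.I * (R * Real.cos θ))
      = ((Real.cos (R * Real.cos θ) : ℝ) : ℂ) + ((Real.sin (R * Real.cos θ) : ℝ) : ℂ) * Complex.I := by
    intro θ
    rw [show Complex.I * ((R:ℂ) * (Real.cos θ : ℝ)) = ((R * Real.cos θ : ℝ) : ℂ) * Complex.I by
      push_cast; ring]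
    rw [Complex.exp_mul_I]
    push_cast
    ring
  simp_rw [h]
  rw [intervalIntegral.integral_add ((Continuous.intervalIntegrable (by continuity) _ _))
    ((Continuous.intervalIntegrable (by continuity) _ _)),
    intervalIntegral.integral_mul_const, intervalIntegral.integral_ofReal,
    intervalIntegral.integral_ofReal, integral_sin_Rcos, integral_cos_Rcos]
  push_cast
  ring

lemma besselJ_zero_eq (R : ℝ) :
    besselJ 0 R = (1 / Real.pi) * ∫ θ in (0:ℝ)..Real.pi, Real.cos (R * Real.sin θ) := by
  unfold besselJ
  congr 1
  apply intervalIntegral.integral_congr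
  intro θ _
  simp [Real.cos_neg]

lemma shift_integral (R φ : ℝ) :
    ∫ θ in (0:ℝ)..(2*Real.pi), Complex.exp (Complex.I * (R * Real.cos (θ - φ)))
      = ∫ θ in (0:ℝ)..(2*Real.pi), Complex.exp (Complex.I * (R * Real.cos θ)) := by
  rw [intervalIntegral.integral_comp_sub_right
    (fun y => Complex.exp (Complex.I * (R * Real.cos y))) φ]
  have hper : Function.Periodic (fun y : ℝ => Complex.exp (Complex.I * (R * Real.cos y)))
      (2 * Real.pi) := by
    intro x; simp [Real.cos_add_two_pi]
  have := hper.intervalIntegral_add_eq (0 - φ) 0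
  simpa [sub_eq_add_neg, add_comm] using this


set_option maxHeartbeats 1000000 in
lemma inner_limit (ω : ℝ) (hω : 0 < ω) (a b : ℝ) :
    Tendsto (fun N : ℕ => (1 / N : ℂ) * ∑ p ∈ Finset.Icc 1 N,
        Complex.exp (Complex.I * ω * (Real.cos (2 * Real.pi * p / N) * a
          + Real.sin (2 * Real.pi * p / N) * b)))
      atTop (nhds ((besselJ 0 (ω * Real.sqrt (a^2 + b^2)) : ℝ) : ℂ)) := by
  set z : ℂ := (↑(ω*a) + ↑(ω*b)*Complex.I : ℂ) with hz
  set s := ‖z‖ with hs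
  set φ := Complex.arg z with hφ
  have habs := Complex.norm_mul_cos_add_sin_mul_I z
  have h1 : s * Real.cos φ = ω * a := by
    have h := congrArg Complex.re habs
    simp only [Complex.mul_re, Complex.add_re, Complex.add_im, Complex.ofReal_re,
      Complex.ofReal_im, Complex.mul_im, Complex.I_re, Complex.I_im, Complex.cos_ofReal_re,
      Complex.cos_ofReal_im, Complex.sin_ofReal_re, Complex.sin_ofReal_im] at h
    ring_nf at h ⊢
    exact h.trans (by simp [hz])
  have h2 : s * Real.sin φ = ω * b := by
    have h := congrArg Complex.im habs
    simp only [Complex.mul_re, Complex.add_re, Complex.add_im, Complex.ofReal_re,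
      Complex.ofReal_im, Complex.mul_im, Complex.I_re, Complex.I_im, Complex.cos_ofReal_re,
      Complex.cos_ofReal_im, Complex.sin_ofReal_re, Complex.sin_ofReal_im] at h
    ring_nf at h ⊢
    exact h.trans (by simp [hz])
  have hseq : s = ω * Real.sqrt (a^2 + b^2) := by
    rw [hs, hz, Complex.norm_add_mul_I,
      show (ω*a)^2 + (ω*b)^2 = ω^2 * (a^2+b^2) by ring,
      Real.sqrt_mul (sq_nonneg ω), Real.sqrt_sq hω.le]
  have hf : Continuous (fun θ : ℝ =>
      Complex.exp (Complex.I * ω * (Real.cos θ * a + Real.sin θ * b))) := by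
    fun_prop
  have harg : ∀ θ : ℝ, Complex.I * ω * (Real.cos θ * a + Real.sin θ * b)
      = Complex.I * (s * Real.cos (θ - φ)) := by
    intro θ
    have hr : ω * (Real.cos θ * a + Real.sin θ * b) = s * Real.cos (θ - φ) := by
      rw [Real.cos_sub]
      linear_combination (-Real.cos θ) * h1 + (-Real.sin θ) * h2
    have hc : (ω:ℂ) * (Real.cos θ * a + Real.sin θ * b)
        = (s:ℂ) * (Real.cos (θ - φ) : ℝ) := by exact_mod_cast congrArg Complex.ofReal hr
    rw [mul_assoc, hc]
  have hval : ((besselJ 0 (ω * Real.sqrt (a^2 + b^2)) : ℝ) : ℂ)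
      = (2 * Real.pi)⁻¹ • ∫ x in (0:ℝ)..(2 * Real.pi),
          Complex.exp (Complex.I * ω * (Real.cos x * a + Real.sin x * b)) := by
    have hcongr : (∫ x in (0:ℝ)..(2 * Real.pi),
        Complex.exp (Complex.I * ω * (Real.cos x * a + Real.sin x * b)))
        = ∫ x in (0:ℝ)..(2 * Real.pi), Complex.exp (Complex.I * (s * Real.cos (x - φ))) := by
      apply intervalIntegral.integral_congr
      intro x _
      exact congrArg Complex.exp (harg x)
    rw [hcongr, shift_integral s φ, exp_integral s, ← hseq, besselJ_zero_eq, Complex.real_smul]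
    push_cast
    have hpi := Real.pi_ne_zero
    field_simp
  rw [hval]
  exact riemann_aux (fun θ : ℝ =>
    Complex.exp (Complex.I * ω * (Real.cos θ * a + Real.sin θ * b))) hf

/-- Structure of the single-frequency subspace migration imaging function:
as the number `N` of equally spaced incident/observation directions tends to
infinity, the modulus of the sum over the inclusions of the squared Riemann
sums of the plane waves converges to `∑ₘ J₀(ω ‖rₘ - r‖)²`. -/
theorem imagingFunction_single_frequency_structure
    (ω : ℝ) (hω : 0 < ω) (M : ℕ) (hM : 0 < M)
    (rm : Fin M → EuclideanSpace ℝ (Fin 2)) (r : EuclideanSpace ℝ (Fin 2)) :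
    Filter.Tendsto
      (fun N : ℕ =>
        ‖(∑ m : Fin M,
          ((1 / N : ℂ) * ∑ p ∈ Finset.Icc 1 N,
            Complex.exp (Complex.I * ω *
              (Real.cos (2 * Real.pi * p / N) * (rm m - r) 0 +
                Real.sin (2 * Real.pi * p / N) * (rm m - r) 1))) ^ 2)‖)
      Filter.atTop (nhds (∑ m : Fin M, besselJ 0 (ω * ‖rm m - r‖) ^ 2)) := by
  have hm : ∀ m : Fin M, Tendsto (fun N : ℕ => (1 / N : ℂ) * ∑ p ∈ Finset.Icc 1 N,
      Complex.exp (Complex.I * ω * (Real.cos (2 * Real.pi * p / N) * (rm m - r) 0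
        + Real.sin (2 * Real.pi * p / N) * (rm m - r) 1)))
      atTop (nhds ((besselJ 0 (ω * ‖rm m - r‖) : ℝ) : ℂ)) := by
    intro m
    have hnorm : ‖rm m - r‖ = Real.sqrt (((rm m - r) 0)^2 + ((rm m - r) 1)^2) := by
      rw [EuclideanSpace.norm_eq]
      congr 1
      rw [Fin.sum_univ_two]
      simp [Real.norm_eq_abs, sq_abs]
    rw [hnorm]
    exact inner_limit ω hω ((rm m - r) 0) ((rm m - r) 1)
  have hsum : Tendsto (fun N : ℕ => ∑ m : Fin M, ((1 / N : ℂ) * ∑ p ∈ Finset.Icc 1 N,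
      Complex.exp (Complex.I * ω * (Real.cos (2 * Real.pi * p / N) * (rm m - r) 0
        + Real.sin (2 * Real.pi * p / N) * (rm m - r) 1))) ^ 2)
      atTop (nhds (∑ m : Fin M, ((besselJ 0 (ω * ‖rm m - r‖) : ℝ) : ℂ) ^ 2)) :=
    tendsto_finset_sum _ (fun m _ => (hm m).pow 2)
  have habs := (continuous_norm.tendsto _).comp hsum
  have hval : ‖(∑ m : Fin M, ((besselJ 0 (ω * ‖rm m - r‖) : ℝ) : ℂ) ^ 2)‖
      = ∑ m : Fin M, besselJ 0 (ω * ‖rm m - r‖) ^ 2 := by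
    rw [show (∑ m : Fin M, ((besselJ 0 (ω * ‖rm m - r‖) : ℝ) : ℂ) ^ 2)
        = ((∑ m : Fin M, besselJ 0 (ω * ‖rm m - r‖) ^ 2 : ℝ) : ℂ) by push_cast; rfl,
      Complex.norm_real, Real.norm_eq_abs]
    exact abs_of_nonneg (Finset.sum_nonneg fun m _ => sq_nonneg _)
  rw [← hval]
  exact habs
end

section
/- Let N and M be positive integers, let k ∈ ℝ, let d₁, …, d_N ∈ ℝ² be vectors, let r₁, …, r_M ∈ ℝ² be points, and let τ₁, …, τ_M and κ₁, …, κ_M be complex numbers. Define the N × N complex matrix 𝕄 by 𝕄_{pq} = Σ_{m=1}^{M} (τ_m + κ_m (d_p · d_q)) exp(i k (d_p + d_q) · r_m). For each m define the N × 3 complex matrix D_m whose p-th row is (1, (d_p)₁, (d_p)₂) · exp(i k d_p · r_m), and let Λ_m be the 3 × 3 diagonal matrix diag(τ_m, κ_m, κ_m). Then 𝕄 = Σ_{m=1}^{M} D_m Λ_m D_mᵀ, where D_mᵀ is the (non-conjugated) transpose. -/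
/-- Exact decomposition of the multi-static response (MSR) matrix:
`𝕄 = ∑ₘ Dₘ Λₘ Dₘᵀ` where `Λₘ = diag(τₘ, κₘ, κₘ)`. -/
theorem msr_matrix_decomposition
    (N M : ℕ) (hN : 0 < N) (hM : 0 < M) (k : ℝ)
    (d : Fin N → EuclideanSpace ℝ (Fin 2))
    (r : Fin M → EuclideanSpace ℝ (Fin 2))
    (τ κ : Fin M → ℂ)
    (𝕄 : Matrix (Fin N) (Fin N) ℂ)
    (h𝕄 : ∀ p q, 𝕄 p q =
      ∑ m : Fin M,
        (τ m + κ m * ((inner ℝ (d p) (d q) : ℝ) : ℂ)) *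
          Complex.exp (Complex.I * k * ((inner ℝ (d p + d q) (r m) : ℝ) : ℂ)))
    (D : Fin M → Matrix (Fin N) (Fin 3) ℂ)
    (hD : ∀ m p j, D m p j =
      ![1, ((d p 0 : ℝ) : ℂ), ((d p 1 : ℝ) : ℂ)] j *
        Complex.exp (Complex.I * k * ((inner ℝ (d p) (r m) : ℝ) : ℂ))) :
    𝕄 = ∑ m : Fin M, D m * Matrix.diagonal ![τ m, κ m, κ m] * Matrix.transpose (D m) := by
  ext p q
  rw [h𝕄, Matrix.sum_apply]
  refine Finset.sum_congr rfl fun m _ => ?_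
  have hip : (inner ℝ (d p) (d q) : ℝ) = d p 0 * d q 0 + d p 1 * d q 1 := by
    simp [EuclideanSpace.inner_eq_star_dotProduct, dotProduct, Fin.sum_univ_two,
      mul_comm]
  have hadd : (inner ℝ (d p + d q) (r m) : ℝ)
      = (inner ℝ (d p) (r m) : ℝ) + (inner ℝ (d q) (r m) : ℝ) := by
    rw [inner_add_left]
  simp only [Matrix.mul_apply, Matrix.diagonal_apply, Matrix.transpose_apply,
    Fin.sum_univ_three, hD]
  norm_num
  simp only [Fin.reduceEq, if_false, ite_false]
  rw [hadd, Complex.ofReal_add (inner ℝ (d p) (r m)), mul_add (Complex.I * (k:ℂ)), Complex.exp_add,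
    hip]
  simp only [Matrix.cons_val_two, Matrix.tail_cons, Matrix.head_cons, Complex.ofReal_add,
    Complex.ofReal_mul]
  ring
end

section
/- For every real number x, |J₁(x)| ≤ 1/√2. -/
open Real in
lemma int_cos_cos (x : ℝ) :
    (∫ θ in (0:ℝ)..π, Real.cos θ * Real.cos (x * Real.sin θ)) = 0 := by
  set f : ℝ → ℝ := fun θ => Real.cos θ * Real.cos (x * Real.sin θ) with hf
  have h1 : (∫ θ in (0:ℝ)..π, f (π - θ)) = ∫ θ in (0:ℝ)..π, f θ := by
    rw [intervalIntegral.integral_comp_sub_left f π]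
    simp
  have h2 : (∫ θ in (0:ℝ)..π, f (π - θ)) = ∫ θ in (0:ℝ)..π, -f θ := by
    apply intervalIntegral.integral_congr
    intro θ hθ
    simp only [hf, Real.cos_pi_sub, Real.sin_pi_sub]
    ring
  rw [intervalIntegral.integral_neg] at h2
  linarith [h1 ▸ h2]

open Real in
lemma besselJ1_eq (x : ℝ) :
    besselJ 1 x = (1 / π) * ∫ θ in (0:ℝ)..π, Real.sin θ * Real.sin (x * Real.sin θ) := by
  unfold besselJ
  congr 1
  have hc : (∫ θ in (0:ℝ)..π, Real.cos ((1:ℕ) * θ - x * Real.sin θ))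
      = ∫ θ in (0:ℝ)..π, (Real.cos θ * Real.cos (x * Real.sin θ)
        + Real.sin θ * Real.sin (x * Real.sin θ)) := by
    apply intervalIntegral.integral_congr
    intro θ _
    simp [Real.cos_sub]
  rw [hc, intervalIntegral.integral_add
    ((show Continuous fun θ => Real.cos θ * Real.cos (x * Real.sin θ) from Real.continuous_cos.mul (by continuity)).intervalIntegrable _ _)
    ((show Continuous fun θ => Real.sin θ * Real.sin (x * Real.sin θ) from Real.continuous_sin.mul (by continuity)).intervalIntegrable _ _),
    int_cos_cos, zero_add]

/-- Boundedness property `|J₁(x)| ≤ 1/√2` for all real `x`. -/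
theorem abs_besselJ1_le_inv_sqrt_two (x : ℝ) :
    |besselJ 1 x| ≤ 1 / Real.sqrt 2 := by
  have hpi : (0:ℝ) < Real.pi := Real.pi_pos
  have hs2 : (0:ℝ) < Real.sqrt 2 := Real.sqrt_pos.mpr (by norm_num)
  have hs2sq : Real.sqrt 2 ^ 2 = 2 := Real.sq_sqrt (by norm_num)
  rw [besselJ1_eq]
  set g : ℝ → ℝ := fun θ => Real.sin θ * Real.sin (x * Real.sin θ) with hg
  set h : ℝ → ℝ := fun θ => (Real.sqrt 2 * Real.sin θ ^ 2 + 1 / Real.sqrt 2) / 2 with hh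
  have hgint : IntervalIntegrable g MeasureTheory.volume 0 Real.pi :=
    (Real.continuous_sin.mul (by continuity)).intervalIntegrable _ _
  have hhint : IntervalIntegrable h MeasureTheory.volume 0 Real.pi :=
    (by continuity : Continuous h).intervalIntegrable _ _
  have habsint : IntervalIntegrable (fun θ => |g θ|) MeasureTheory.volume 0 Real.pi :=
    hgint.abs
  have hpb : ∀ θ ∈ Set.Icc (0:ℝ) Real.pi, |g θ| ≤ h θ := by
    intro θ _
    have hrs : Real.sqrt (Real.sqrt 2) ^ 2 = Real.sqrt 2 := Real.sq_sqrt hs2.le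
    have hrs0 : (0:ℝ) < Real.sqrt (Real.sqrt 2) := Real.sqrt_pos.mpr hs2
    set s := Real.sin θ
    set t := Real.sin (x * Real.sin θ)
    set u := Real.sqrt (Real.sqrt 2) * |s|
    set v := |t| / Real.sqrt (Real.sqrt 2)
    have huv : u * v = |s| * |t| := by
      rw [show u * v = |s| * |t| * (Real.sqrt (Real.sqrt 2) / Real.sqrt (Real.sqrt 2)) by simp only [u, v]; ring, div_self hrs0.ne', mul_one]
    have hu2 : u ^ 2 = Real.sqrt 2 * s ^ 2 := by
      rw [mul_pow, hrs, sq_abs]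
    have hv2 : v ^ 2 = t ^ 2 / Real.sqrt 2 := by
      rw [div_pow, hrs, sq_abs]
    have hamgm : 2 * (u * v) ≤ u ^ 2 + v ^ 2 := by linarith [two_mul_le_add_sq u v]
    have h1 : 2 * |g θ| ≤ Real.sqrt 2 * s ^ 2 + t ^ 2 / Real.sqrt 2 := by
      have habsg : |g θ| = |s| * |t| := abs_mul _ _
      rw [habsg, ← huv, ← hu2, ← hv2]
      exact hamgm
    have h2 : t ^ 2 ≤ 1 := by
      nlinarith [Real.neg_one_le_sin (x * Real.sin θ), Real.sin_le_one (x * Real.sin θ)]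
    have h3 : t ^ 2 / Real.sqrt 2 ≤ 1 / Real.sqrt 2 := by gcongr
    simp only [hh]
    linarith
  have habs : |∫ θ in (0:ℝ)..Real.pi, g θ| ≤ ∫ θ in (0:ℝ)..Real.pi, |g θ| :=
    intervalIntegral.abs_integral_le_integral_abs hpi.le
  have hmono : (∫ θ in (0:ℝ)..Real.pi, |g θ|) ≤ ∫ θ in (0:ℝ)..Real.pi, h θ :=
    intervalIntegral.integral_mono_on hpi.le habsint hhint hpb
  have hval : (∫ θ in (0:ℝ)..Real.pi, h θ) = Real.pi / Real.sqrt 2 := by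
    simp only [hh]
    rw [intervalIntegral.integral_div]
    rw [intervalIntegral.integral_add
      ((by continuity : Continuous fun θ : ℝ => Real.sqrt 2 * Real.sin θ ^ 2).intervalIntegrable _ _)
      (intervalIntegrable_const)]
    rw [intervalIntegral.integral_const_mul, integral_sin_sq]
    simp [Real.sin_pi, Real.cos_pi]
    have h22 : Real.sqrt 2 * Real.sqrt 2 = 2 := Real.mul_self_sqrt (by norm_num)
    field_simp
    linear_combination h22
  rw [abs_mul]
  have habs1 : |1 / Real.pi| = 1 / Real.pi := abs_of_pos (by positivity)
  rw [habs1]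
  calc 1 / Real.pi * |∫ θ in (0:ℝ)..Real.pi, g θ|
      ≤ 1 / Real.pi * (Real.pi / Real.sqrt 2) := by
        apply mul_le_mul_of_nonneg_left _ (by positivity)
        exact habs.trans (hmono.trans_eq hval)
    _ = 1 / Real.sqrt 2 := by field_simp
end
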